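/- Let M ⊆ ℝ^n be compact convex, and define BR(x) ⊆ M for x ∈ ℝ^d by BR(x) = argmax_{m∈M} ⟨r + Lx, m⟩ where r ∈ ℝ^n and L : ℝ^d → ℝ^n is linear with L(1)(s,a)-component pattern: (L·1) = r₁ where r₁ ∈ ℝ^n is a fixed nonnegative vector. Suppose x⋆ is an interior point of P_{m₁} = {x : m₁ ∈ BR(x)}, and suppose m₂ ∈ BR(x⋆) with ⟨r₁, m₁⟩ > ⟨r₁, m₂⟩. Derive a contradiction: for every ε > 0, the point x(ε) = x⋆ − ε·1 satisfies ⟨r + L x(ε), m₁⟩ < ⟨r + L x(ε), m₂⟩, hence x(ε) ∉ P_{m₁}, so x⋆ is not interior to P_{m₁}. -/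
import Mathlib


/-- If `x⋆` is an interior point of the allocation region of `m₁`, and
`m₁, m₂` are both best responses at `x⋆` with `⟨r₁, m₁⟩ > ⟨r₁, m₂⟩` (where `r₁ = L 1`
is the nonnegative leader reward), then a contradiction follows: decreasing all
allocations by `ε` makes `m₁` strictly worse than `m₂`, so `x⋆` cannot be interior. -/
theorem interior_allocation_equal_leader_payoff
    {n d : ℕ} (M : Set (Fin n → ℝ)) (hMcpt : IsCompact M) (hMconv : Convex ℝ M)
    (r r₁ : Fin n → ℝ) (L : (Fin d → ℝ) →ₗ[ℝ] (Fin n → ℝ))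
    (hL1 : L (fun _ => (1 : ℝ)) = r₁) (hr₁ : ∀ i, 0 ≤ r₁ i)
    (xstar : Fin d → ℝ) (m₁ m₂ : Fin n → ℝ)
    (hm₁ : m₁ ∈ M) (hm₂ : m₂ ∈ M)
    (hbr₁ : ∀ m' ∈ M, ∑ i, (r i + L xstar i) * m' i ≤ ∑ i, (r i + L xstar i) * m₁ i)
    (hbr₂ : ∀ m' ∈ M, ∑ i, (r i + L xstar i) * m' i ≤ ∑ i, (r i + L xstar i) * m₂ i)
    (hlt : ∑ i, r₁ i * m₂ i < ∑ i, r₁ i * m₁ i)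
    (hint : xstar ∈ interior {x : Fin d → ℝ |
      ∀ m' ∈ M, ∑ i, (r i + L x i) * m' i ≤ ∑ i, (r i + L x i) * m₁ i}) :
    False := by
  -- both m₁ and m₂ are best responses at xstar, so payoffs equal
  have heq : ∑ i, (r i + L xstar i) * m₁ i = ∑ i, (r i + L xstar i) * m₂ i :=
    le_antisymm (hbr₂ m₁ hm₁) (hbr₁ m₂ hm₂)
  -- get a ball inside the set
  rw [mem_interior_iff_mem_nhds, Metric.mem_nhds_iff] at hint
  obtain ⟨ε, hε, hball⟩ := hint
  set x : Fin d → ℝ := xstar - (ε/2) • (fun _ => (1 : ℝ)) with hx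
  have hxmem : x ∈ Metric.ball xstar ε := by
    rw [Metric.mem_ball]
    have : dist x xstar = ‖(ε/2) • (fun _ => (1 : ℝ) : Fin d → ℝ)‖ := by
      rw [dist_eq_norm, hx, sub_sub_cancel_left, norm_neg]
    rw [this]
    calc ‖(ε/2) • (fun _ => (1 : ℝ) : Fin d → ℝ)‖ ≤ ε/2 := by
          rw [norm_smul]
          have h1 : ‖(fun _ => (1 : ℝ) : Fin d → ℝ)‖ ≤ 1 := by
            apply pi_norm_le_iff_of_nonneg zero_le_one |>.2
            intro i; simp
          calc ‖(ε/2 : ℝ)‖ * ‖(fun _ => (1 : ℝ) : Fin d → ℝ)‖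
              ≤ ‖(ε/2 : ℝ)‖ * 1 := by
                exact mul_le_mul_of_nonneg_left h1 (norm_nonneg _)
            _ = ε/2 := by rw [mul_one, Real.norm_eq_abs, abs_of_pos (by linarith)]
      _ < ε := by linarith
  have hm := hball hxmem
  have hLx : ∀ i, L x i = L xstar i - (ε/2) * r₁ i := by
    intro i
    rw [hx, map_sub, map_smul, hL1]
    simp [mul_comm]
  have key : ∑ i, (r i + L x i) * m₂ i ≤ ∑ i, (r i + L x i) * m₁ i := hm m₂ hm₂
  have expand : ∀ m : Fin n → ℝ, ∑ i, (r i + L x i) * m i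
      = ∑ i, (r i + L xstar i) * m i - (ε/2) * ∑ i, r₁ i * m i := by
    intro m
    rw [Finset.mul_sum, ← Finset.sum_sub_distrib]
    apply Finset.sum_congr rfl
    intro i _
    rw [hLx i]; ring
  rw [expand m₁, expand m₂, heq] at key
  have : (ε/2) * ∑ i, r₁ i * m₂ i < (ε/2) * ∑ i, r₁ i * m₁ i :=
    mul_lt_mul_of_pos_left hlt (by linarith)
  linarith
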